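/- Let A and B be subgroups of a group G such that AB ∩ BA = A ∪ B. If b₁, b₂ ∈ B, a₁, a₂ ∈ A and b ∈ B \ A satisfy b₁a₁ = b₂a₂b, then Ba₁ = B. -/
import Mathlib


open scoped Pointwise

/-- If `AB ∩ BA = A ∪ B`, `b₁, b₂ ∈ B`, `a₁, a₂ ∈ A`, `b ∈ B \ A` and
`b₁a₁ = b₂a₂b`, then `Ba₁ = B`. -/
theorem stmt12 {G : Type*} [Group G] (A B : Subgroup G)
    (h4 : ((A : Set G) * (B : Set G)) ∩ ((B : Set G) * (A : Set G)) =
      (A : Set G) ∪ (B : Set G))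
    (b₁ b₂ b a₁ a₂ : G) (hb₁ : b₁ ∈ B) (hb₂ : b₂ ∈ B) (hb : b ∈ B) (hbA : b ∉ A)
    (ha₁ : a₁ ∈ A) (ha₂ : a₂ ∈ A) (heq : b₁ * a₁ = b₂ * a₂ * b) :
    (B : Set G) * {a₁} = (B : Set G) := by
  -- a₂ * b ∈ AB ∩ BA
  have hmem : a₂ * b ∈ ((A : Set G) * (B : Set G)) ∩ ((B : Set G) * (A : Set G)) := by
    constructor
    · exact Set.mul_mem_mul ha₂ hb
    · have : a₂ * b = (b₂⁻¹ * b₁) * a₁ := by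
        have h := congrArg (fun x => b₂⁻¹ * x) heq
        simpa [mul_assoc] using h.symm
      rw [this]
      exact Set.mul_mem_mul (B.mul_mem (B.inv_mem hb₂) hb₁) ha₁
  rw [h4] at hmem
  have ha₂B : a₂ * b ∈ B := by
    rcases hmem with h | h
    · exact absurd (by have := A.mul_mem (A.inv_mem ha₂) h; simpa using this) hbA
    · exact h
  have ha₂' : a₂ ∈ B := by
    have := B.mul_mem ha₂B (B.inv_mem hb); simpa using this
  have hba₁ : b₁ * a₁ ∈ B := heq ▸ B.mul_mem (B.mul_mem hb₂ ha₂') hb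
  have ha₁B : a₁ ∈ B := by
    have := B.mul_mem (B.inv_mem hb₁) hba₁; simpa using this
  ext x
  simp only [Set.mem_mul, Set.mem_singleton_iff, SetLike.mem_coe]
  constructor
  · rintro ⟨y, hy, z, rfl, rfl⟩
    exact B.mul_mem hy ha₁B
  · intro hx
    exact ⟨x * a₁⁻¹, B.mul_mem hx (B.inv_mem ha₁B), a₁, rfl, by group⟩
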